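/- Let $A, B \subseteq [0,1]$ be disjoint measurable sets and let $f = \alpha\chi_A + \beta\chi_B \in L_\infty[0,1]$ be mean zero. Then there exists $g \in L_\infty[0,1]$ with $\|g\|_\infty \leq \|f\|_\infty$ and a measure preserving transformation mod0 $T$ of $[0,1]$ with $f = g \circ T - g$ almost everywhere; moreover $T$ can be chosen to be the identity on $[0,1] \setminus (A \cup B)$. -/

import Mathlib

open MeasureTheory Set

noncomputable def cphi (A : Set ℝ) (c : ℝ) : ℝ → ℝ :=
  fun x => c + (volume (A ∩ Set.Iic x)).toReal

section cphi

variable {A : Set ℝ} {c : ℝ}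

lemma vol_ne_top (hsub : A ⊆ Icc 0 1) : volume A ≠ ⊤ := by
  refine ne_top_of_le_ne_top ?_ (measure_mono hsub)
  simp [Real.volume_Icc]

lemma volIic_ne_top (hsub : A ⊆ Icc 0 1) (x : ℝ) : volume (A ∩ Iic x) ≠ ⊤ :=
  ne_top_of_le_ne_top (vol_ne_top hsub) (measure_mono inter_subset_left)

lemma cphi_diff (hsub : A ⊆ Icc 0 1) {x y : ℝ} (h : x ≤ y) :
    cphi A c y - cphi A c x = (volume (A ∩ Ioc x y)).toReal := by
  have hsplit : A ∩ Iic y = (A ∩ Iic x) ∪ (A ∩ Ioc x y) := by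
    rw [← inter_union_distrib_left, Iic_union_Ioc_eq_Iic h]
  have hdisj : Disjoint (A ∩ Iic x) (A ∩ Ioc x y) :=
    (Iic_disjoint_Ioc le_rfl).mono inter_subset_right inter_subset_right
  have hmeas : volume (A ∩ Iic y) = volume (A ∩ Iic x) + volume (A ∩ Ioc x y) := by
    have h1 : (A ∩ Iic y) ∩ Iic x = A ∩ Iic x := by
      rw [inter_assoc, Iic_inter_Iic, min_eq_right h]
    have h2 : (A ∩ Iic y) \ Iic x = A ∩ Ioc x y := by
      ext z
      simp only [mem_diff, mem_inter_iff, mem_Iic, mem_Ioc, not_le]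
      tauto
    rw [← measure_inter_add_diff (A ∩ Iic y) measurableSet_Iic, h1, h2]
  simp only [cphi]
  rw [hmeas, ENNReal.toReal_add (volIic_ne_top hsub x)
    (ne_top_of_le_ne_top (vol_ne_top hsub) (measure_mono inter_subset_left))]
  ring

lemma cphi_mono (hsub : A ⊆ Icc 0 1) : Monotone (cphi A c) := by
  intro x y h
  have := cphi_diff (c := c) hsub h
  have h2 : (0:ℝ) ≤ (volume (A ∩ Ioc x y)).toReal := ENNReal.toReal_nonneg
  linarith

lemma cphi_lip (hsub : A ⊆ Icc 0 1) : LipschitzWith 1 (cphi A c) := by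
  refine LipschitzWith.of_dist_le_mul fun x y => ?_
  simp only [NNReal.coe_one, one_mul, Real.dist_eq]
  rcases le_total x y with h | h
  · have hd := cphi_diff (c := c) hsub h
    have hle : (volume (A ∩ Ioc x y)).toReal ≤ y - x := by
      have : volume (A ∩ Ioc x y) ≤ volume (Ioc x y) := measure_mono inter_subset_right
      calc (volume (A ∩ Ioc x y)).toReal ≤ (volume (Ioc x y)).toReal :=
            ENNReal.toReal_mono (by simp [Real.volume_Ioc]) this
        _ = y - x := by rw [Real.volume_Ioc, ENNReal.toReal_ofReal (by linarith)]
    have hm := cphi_mono (c := c) hsub h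
    rw [abs_of_nonpos (by linarith), abs_of_nonpos (by linarith)]
    linarith
  · have hd := cphi_diff (c := c) hsub h
    have hle : (volume (A ∩ Ioc y x)).toReal ≤ x - y := by
      have : volume (A ∩ Ioc y x) ≤ volume (Ioc y x) := measure_mono inter_subset_right
      calc (volume (A ∩ Ioc y x)).toReal ≤ (volume (Ioc y x)).toReal :=
            ENNReal.toReal_mono (by simp [Real.volume_Ioc]) this
        _ = x - y := by rw [Real.volume_Ioc, ENNReal.toReal_ofReal (by linarith)]
    have hm := cphi_mono (c := c) hsub h
    rw [abs_of_nonneg (by linarith), abs_of_nonneg (by linarith)]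
    linarith

lemma cphi_cont (hsub : A ⊆ Icc 0 1) : Continuous (cphi A c) :=
  (cphi_lip hsub).continuous

lemma cphi_meas (hsub : A ⊆ Icc 0 1) : Measurable (cphi A c) :=
  (cphi_cont hsub).measurable

lemma cphi_mem (hsub : A ⊆ Icc 0 1) (x : ℝ) :
    cphi A c x ∈ Icc c (c + (volume A).toReal) := by
  constructor
  · simp [cphi, ENNReal.toReal_nonneg]
  · simp only [cphi, add_le_add_iff_left]
    exact ENNReal.toReal_mono (vol_ne_top hsub) (measure_mono inter_subset_left)

lemma cphi_neg (hsub : A ⊆ Icc 0 1) {x : ℝ} (hx : x < 0) : cphi A c x = c := by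
  have : A ∩ Iic x = ∅ := by
    ext y; simp only [mem_inter_iff, mem_Iic, mem_empty_iff_false, iff_false, not_and]
    intro hy; have := (hsub hy).1; intro h; linarith
  simp [cphi, this]

lemma cphi_one (hsub : A ⊆ Icc 0 1) {x : ℝ} (hx : 1 ≤ x) :
    cphi A c x = c + (volume A).toReal := by
  have : A ∩ Iic x = A := by
    refine inter_eq_self_of_subset_left fun y hy => ?_
    exact le_trans (hsub hy).2 hx
  rw [cphi, this]

lemma cphi_vol_Iic (x : ℝ) (hsub : A ⊆ Icc 0 1) :
    volume (A ∩ Iic x) = ENNReal.ofReal (cphi A c x - c) := by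
  simp [cphi, ENNReal.ofReal_toReal (volIic_ne_top hsub x)]

end cphi

section push

variable {A : Set ℝ} {c : ℝ}

lemma restrict_finite (hsub : A ⊆ Icc 0 1) : IsFiniteMeasure (volume.restrict A) := by
  constructor
  rw [Measure.restrict_apply_univ]
  exact lt_of_le_of_ne le_top (vol_ne_top hsub)

lemma cphi_map (hA : MeasurableSet A) (hsub : A ⊆ Icc 0 1) :
    Measure.map (cphi A c) (volume.restrict A)
      = volume.restrict (Icc c (c + (volume A).toReal)) := by
  haveI := restrict_finite hsub
  set a := (volume A).toReal with ha
  have ha0 : 0 ≤ a := ENNReal.toReal_nonneg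
  refine Measure.ext_of_Iic _ _ fun t => ?_
  rw [Measure.map_apply (cphi_meas hsub) measurableSet_Iic,
    Measure.restrict_apply (cphi_meas hsub measurableSet_Iic),
    Measure.restrict_apply measurableSet_Iic]
  rcases lt_or_ge t c with htc | htc
  · have h1 : cphi A c ⁻¹' Iic t ∩ A = ∅ := by
      ext x
      simp only [mem_inter_iff, mem_preimage, mem_Iic, mem_empty_iff_false, iff_false, not_and]
      intro hx _
      have := (cphi_mem (c := c) hsub x).1
      linarith
    have h2 : Iic t ∩ Icc c (c + a) = ∅ := by
      ext x
      simp only [mem_inter_iff, mem_Iic, mem_Icc, mem_empty_iff_false, iff_false]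
      rintro ⟨hx, hc, -⟩
      linarith
    rw [h1, h2]
  rcases le_or_gt (c + a) t with hta | hta
  · have h1 : cphi A c ⁻¹' Iic t ∩ A = A := by
      refine inter_eq_self_of_subset_right fun x hx => ?_
      have := (cphi_mem (c := c) hsub x).2
      simp only [mem_preimage, mem_Iic]
      linarith
    have h2 : Iic t ∩ Icc c (c + a) = Icc c (c + a) := by
      refine inter_eq_self_of_subset_right fun x hx => ?_
      simp only [mem_Iic]
      exact le_trans hx.2 hta
    rw [h1, h2, Real.volume_Icc, add_sub_cancel_left, ha,
      ENNReal.ofReal_toReal (vol_ne_top hsub)]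
  · -- c ≤ t < c + a
    set s : Set ℝ := cphi A c ⁻¹' Iic t with hs
    have hne : (-1 : ℝ) ∈ s := by
      simp only [hs, mem_preimage, mem_Iic, cphi_neg hsub (by norm_num : (-1:ℝ) < 0)]
      exact htc
    have hbdd : BddAbove s := by
      refine ⟨1, fun x hx => ?_⟩
      by_contra hx1
      push_neg at hx1
      have := cphi_one (c := c) hsub hx1.le
      simp only [hs, mem_preimage, mem_Iic] at hx
      rw [this] at hx
      linarith
    have hcl : IsClosed s := IsClosed.preimage (cphi_cont hsub) isClosed_Iic
    set x₀ := sSup s with hx₀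
    have hx₀s : x₀ ∈ s := hcl.csSup_mem ⟨_, hne⟩ hbdd
    have hx₀le : cphi A c x₀ ≤ t := hx₀s
    have hx₀eq : cphi A c x₀ = t := by
      by_contra hne'
      have hlt : cphi A c x₀ < t := lt_of_le_of_ne hx₀le hne'
      have hopen : IsOpen (cphi A c ⁻¹' Iio t) := (cphi_cont hsub).isOpen_preimage _ isOpen_Iio
      have hx₀mem : x₀ ∈ cphi A c ⁻¹' Iio t := hlt
      obtain ⟨ε, hε, hball⟩ := Metric.isOpen_iff.1 hopen x₀ hx₀mem
      have hmem : x₀ + ε / 2 ∈ s := by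
        have hb : x₀ + ε / 2 ∈ Metric.ball x₀ ε := by
          rw [Metric.mem_ball, Real.dist_eq]
          have he : x₀ + ε / 2 - x₀ = ε / 2 := by ring
          rw [he, abs_of_pos (by linarith)]
          linarith
        have := hball hb
        simp only [hs, mem_preimage, mem_Iic]
        exact le_of_lt this
      have := le_csSup hbdd hmem
      linarith
    have hseq : s = Iic x₀ := by
      ext x
      constructor
      · intro hx; exact le_csSup hbdd hx
      · intro hx
        simp only [hs, mem_preimage, mem_Iic]
        calc cphi A c x ≤ cphi A c x₀ := cphi_mono hsub hx
          _ ≤ t := hx₀le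
    have h1 : volume (s ∩ A) = ENNReal.ofReal (t - c) := by
      rw [hseq, inter_comm, cphi_vol_Iic (c := c) x₀ hsub, hx₀eq]
    have h2 : Iic t ∩ Icc c (c + a) = Icc c t := by
      ext x
      simp only [mem_inter_iff, mem_Iic, mem_Icc]
      constructor
      · rintro ⟨h1', h2', _⟩; exact ⟨h2', h1'⟩
      · rintro ⟨h1', h2'⟩; exact ⟨h2', h1', by linarith⟩
    rw [h1, h2, Real.volume_Icc]

lemma cphi_push (hA : MeasurableSet A) (hsub : A ⊆ Icc 0 1) {S : Set ℝ}
    (hS : MeasurableSet S) :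
    volume (A ∩ cphi A c ⁻¹' S) = volume (Icc c (c + (volume A).toReal) ∩ S) := by
  have := cphi_map (c := c) hA hsub
  have h1 : Measure.map (cphi A c) (volume.restrict A) S
      = volume.restrict (Icc c (c + (volume A).toReal)) S := by rw [this]
  rw [Measure.map_apply (cphi_meas hsub) hS, Measure.restrict_apply' hA,
    Measure.restrict_apply' measurableSet_Icc] at h1
  rw [inter_comm A, inter_comm (Icc c (c + (volume A).toReal)) S]
  exact h1

lemma cphi_fiber_null (hA : MeasurableSet A) (hsub : A ⊆ Icc 0 1) (q : ℝ) :
    volume (A ∩ {x | x < q ∧ cphi A c x = cphi A c q}) = 0 := by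
  set φ := cphi A c with hφ
  set U := {x | x < q ∧ φ x = φ q} with hU
  rcases eq_empty_or_nonempty U with hUe | ⟨x₁, hx₁⟩
  · simp [hUe]
  by_cases hlow : ∃ x ∈ U, x ≤ -1
  · obtain ⟨x, hxU, hx1⟩ := hlow
    have h0 : φ x = c := cphi_neg hsub (by linarith)
    have hq : φ q = c := by rw [← hxU.2, h0]
    have hIic : volume (A ∩ Iic q) = 0 := by
      rw [cphi_vol_Iic (c := c) q hsub, ← hφ, hq]
      simp
    refine measure_mono_null ?_ hIic
    exact inter_subset_inter_right A fun x hx => le_of_lt hx.1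
  · push_neg at hlow
    set S' := Icc (-1 : ℝ) q ∩ φ ⁻¹' {φ q} with hS'
    have hclosed : IsClosed S' :=
      isClosed_Icc.inter (IsClosed.preimage (cphi_cont hsub) isClosed_singleton)
    have hx₁S' : x₁ ∈ S' := by
      refine ⟨⟨(hlow x₁ hx₁).le, hx₁.1.le⟩, ?_⟩
      simp only [mem_preimage, mem_singleton_iff]
      exact hx₁.2
    have hbdd : BddBelow S' := ⟨-1, fun x hx => hx.1.1⟩
    set u := sInf S' with hu
    have huS' : u ∈ S' := hclosed.csInf_mem ⟨_, hx₁S'⟩ hbdd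
    have huφ : φ u = φ q := huS'.2
    have hUsub : U ⊆ insert u (Ioc u q) := by
      intro x hx
      have hxS' : x ∈ S' := ⟨⟨(hlow x hx).le, hx.1.le⟩, hx.2⟩
      have hux : u ≤ x := csInf_le hbdd hxS'
      rcases eq_or_lt_of_le hux with h | h
      · exact Or.inl h.symm
      · exact Or.inr ⟨h, hx.1.le⟩
    have hIoc : volume (A ∩ Ioc u q) = 0 := by
      have hdiff := cphi_diff (c := c) hsub huS'.1.2
      rw [← hφ, huφ, sub_self] at hdiff
      have hfin := ne_top_of_le_ne_top (vol_ne_top hsub)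
        (measure_mono (inter_subset_left (s := A) (t := Ioc u q)))
      exact (ENNReal.toReal_eq_zero_iff _).1 hdiff.symm |>.resolve_right hfin
    refine measure_mono_null (inter_subset_inter_right A hUsub) ?_
    refine le_antisymm ?_ (zero_le)
    calc volume (A ∩ insert u (Ioc u q)) ≤ volume ({u} ∪ (A ∩ Ioc u q)) := by
          refine measure_mono fun x hx => ?_
          rcases hx.2 with h | h
          · exact Or.inl (by simp [h])
          · exact Or.inr ⟨hx.1, h⟩
      _ ≤ volume ({u} : Set ℝ) + volume (A ∩ Ioc u q) := measure_union_le _ _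
      _ ≤ 0 := by rw [hIoc, Real.volume_singleton, add_zero]

end push

lemma cdf_exists (A : Set ℝ) (hA : MeasurableSet A) (hsub : A ⊆ Icc 0 1) (c : ℝ) :
    ∃ N M : Set ℝ, MeasurableSet N ∧ MeasurableSet M ∧ N ⊆ A ∧
      M ⊆ Ico c (c + (volume A).toReal) ∧ volume N = 0 ∧ volume M = 0 ∧
      BijOn (cphi A c) (A \ N) (Ico c (c + (volume A).toReal) \ M) ∧
      (∀ S, S ⊆ A \ N → MeasurableSet S →
        MeasurableSet (cphi A c '' S) ∧ volume (cphi A c '' S) = volume S) ∧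
      (∀ S : Set ℝ, MeasurableSet S →
        volume (A ∩ cphi A c ⁻¹' S) = volume (Icc c (c + (volume A).toReal) ∩ S)) := by
  set φ := cphi A c with hφ
  set a := (volume A).toReal with ha
  have ha0 : 0 ≤ a := ENNReal.toReal_nonneg
  set N₀ : Set ℝ := ⋃ q : ℚ, (A ∩ {x | x < (q:ℝ) ∧ φ x = φ q}) with hN₀
  have hN₀meas : MeasurableSet N₀ := by
    refine MeasurableSet.iUnion fun q => hA.inter ?_
    have : {x : ℝ | x < (q:ℝ) ∧ φ x = φ q} = Iio (q:ℝ) ∩ φ ⁻¹' {φ q} := by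
      ext x
      simp only [mem_setOf_eq, mem_inter_iff, mem_Iio, mem_preimage, mem_singleton_iff]
    rw [this]
    exact measurableSet_Iio.inter ((cphi_meas hsub) (measurableSet_singleton _))
  have hN₀null : volume N₀ = 0 :=
    measure_iUnion_null fun q => cphi_fiber_null hA hsub q
  set N₁ : Set ℝ := A ∩ φ ⁻¹' {c + a} with hN₁
  have hN₁meas : MeasurableSet N₁ := hA.inter ((cphi_meas hsub) (measurableSet_singleton _))
  have hN₁null : volume N₁ = 0 := by
    rw [hN₁, cphi_push hA hsub (measurableSet_singleton _)]
    exact measure_mono_null inter_subset_right (Real.volume_singleton)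
  set N : Set ℝ := (N₀ ∩ A) ∪ N₁ with hN
  have hNmeas : MeasurableSet N := (hN₀meas.inter hA).union hN₁meas
  have hNsub : N ⊆ A := union_subset inter_subset_right inter_subset_left
  have hNnull : volume N = 0 := by
    refine measure_union_null (measure_mono_null inter_subset_left hN₀null) hN₁null
  -- injectivity
  have hinjaux : ∀ x ∈ A \ N, ∀ y ∈ A \ N, x < y → φ x = φ y → False := by
    intro x hx y hy hxy heq
    obtain ⟨q, hq1, hq2⟩ := exists_rat_btwn hxy
    have h1 : φ x ≤ φ (q:ℝ) := cphi_mono hsub hq1.le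
    have h2 : φ (q:ℝ) ≤ φ y := cphi_mono hsub hq2.le
    have h3 : φ x = φ (q:ℝ) := le_antisymm h1 (heq ▸ h2)
    have : x ∈ N₀ := mem_iUnion.2 ⟨q, hx.1, hq1, h3⟩
    exact hx.2 (Or.inl ⟨this, hx.1⟩)
  have hinj : InjOn φ (A \ N) := by
    intro x hx y hy heq
    rcases lt_trichotomy x y with h | h | h
    · exact absurd (hinjaux x hx y hy h heq) not_false
    · exact h
    · exact absurd (hinjaux y hy x hx h heq.symm) not_false
  -- preimage of image
  have hpreim : ∀ S, S ⊆ A \ N → A ∩ φ ⁻¹' (φ '' S) ⊆ S ∪ N := by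
    intro S hS x hx
    obtain ⟨s, hsS, hsx⟩ := hx.2
    by_cases hxN : x ∈ N
    · exact Or.inr hxN
    rcases lt_trichotomy x s with h | h | h
    · exact absurd (hinjaux x ⟨hx.1, hxN⟩ s (hS hsS) h hsx.symm) not_false
    · left; rw [h]; exact hsS
    · exact absurd (hinjaux s (hS hsS) x ⟨hx.1, hxN⟩ h hsx) not_false
  -- forward property
  have hfwd : ∀ S, S ⊆ A \ N → MeasurableSet S →
      MeasurableSet (φ '' S) ∧ volume (φ '' S) = volume S := by
    intro S hSsub hSmeas
    have himg : MeasurableSet (φ '' S) :=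
      hSmeas.image_of_continuousOn_injOn ((cphi_cont hsub).continuousOn)
        (hinj.mono hSsub)
    refine ⟨himg, ?_⟩
    have hsub1 : φ '' S ⊆ Icc c (c + a) := by
      rintro y ⟨x, _, rfl⟩
      exact cphi_mem hsub x
    have h1 : volume (φ '' S) = volume (Icc c (c + a) ∩ (φ '' S)) := by
      rw [inter_eq_self_of_subset_right hsub1]
    have h2 : volume (Icc c (c + a) ∩ (φ '' S)) = volume (A ∩ φ ⁻¹' (φ '' S)) :=
      (cphi_push hA hsub himg).symm
    have hlow : volume S ≤ volume (A ∩ φ ⁻¹' (φ '' S)) := by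
      refine measure_mono fun x hx => ⟨(hSsub hx).1, subset_preimage_image φ S hx⟩
    have hhigh : volume (A ∩ φ ⁻¹' (φ '' S)) ≤ volume S := by
      calc volume (A ∩ φ ⁻¹' (φ '' S)) ≤ volume (S ∪ N) := measure_mono (hpreim S hSsub)
        _ ≤ volume S + volume N := measure_union_le _ _
        _ = volume S := by rw [hNnull, add_zero]
    rw [h1, h2]
    exact le_antisymm hhigh hlow
  -- the image set
  have hANmeas : MeasurableSet (A \ N) := hA.diff hNmeas
  set E : Set ℝ := φ '' (A \ N) with hE
  have hEmeas : MeasurableSet E := (hfwd (A \ N) subset_rfl hANmeas).1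
  have hEvol : volume E = volume A := by
    rw [(hfwd (A \ N) subset_rfl hANmeas).2, measure_diff_null hNnull]
  have hEsub : E ⊆ Ico c (c + a) := by
    rintro y ⟨x, hx, rfl⟩
    refine ⟨(cphi_mem hsub x).1, lt_of_le_of_ne (cphi_mem hsub x).2 ?_⟩
    intro hcon
    exact hx.2 (Or.inr ⟨hx.1, by simpa using hcon⟩)
  set M : Set ℝ := Ico c (c + a) \ E with hM
  have hMmeas : MeasurableSet M := measurableSet_Ico.diff hEmeas
  have hMnull : volume M = 0 := by
    rw [hM, measure_diff hEsub hEmeas.nullMeasurableSet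
      (by rw [hEvol]; exact vol_ne_top hsub)]
    rw [hEvol, Real.volume_Ico, add_sub_cancel_left, ha,
      ENNReal.ofReal_toReal (vol_ne_top hsub), tsub_self]
  refine ⟨N, M, hNmeas, hMmeas, hNsub, diff_subset, hNnull, hMnull, ?_, hfwd, ?_⟩
  · have : Ico c (c + a) \ M = E := diff_diff_cancel_left hEsub
    rw [this]
    exact hinj.bijOn_image
  · intro S hS
    exact cphi_push hA hsub hS

/-- A measure preserving transformation mod0 between subsets `A` and `B` of `ℝ`:
a bijection between co-null subsets, measurable in both directions, preserving
Lebesgue measure of measurable sets. -/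
def MPTmod0 (A B : Set ℝ) (T : ℝ → ℝ) : Prop :=
  ∃ N N' : Set ℝ, N ⊆ A ∧ N' ⊆ B ∧
    MeasureTheory.volume N = 0 ∧ MeasureTheory.volume N' = 0 ∧
    Set.BijOn T (A \ N) (B \ N') ∧
    (∀ S : Set ℝ, S ⊆ A \ N → MeasurableSet S →
      MeasurableSet (T '' S) ∧ MeasureTheory.volume (T '' S) = MeasureTheory.volume S) ∧
    (∀ S : Set ℝ, S ⊆ B \ N' → MeasurableSet S → MeasurableSet ((A \ N) ∩ T ⁻¹' S))

lemma mpt_id : MPTmod0 (Set.Icc 0 1) (Set.Icc 0 1) (fun x => x) := by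
  refine ⟨∅, ∅, empty_subset _, empty_subset _, measure_empty, measure_empty, ?_, ?_, ?_⟩
  · exact bijOn_id _
  · intro S _ hS
    constructor
    · simpa [image_id] using hS
    · simp [image_id]
  · intro S _ hS
    simpa using (measurableSet_Icc.diff (MeasurableSet.empty)).inter hS

lemma essSup_lower {μ : Measure ℝ} {f : ℝ → ℝ} {v : ℝ} {s : Set ℝ}
    (hs : μ s ≠ 0) (hf : ∀ x ∈ s, f x = v) :
    ENNReal.ofReal |v| ≤ eLpNormEssSup f μ := by
  by_contra h
  push_neg at h
  have hae : ∀ᵐ x ∂μ, (‖f x‖₊ : ENNReal) < ENNReal.ofReal |v| := ae_lt_of_essSup_lt h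
  rw [ae_iff] at hae
  refine hs (measure_mono_null ?_ hae)
  intro x hx
  simp only [mem_setOf_eq, not_lt]
  rw [hf x hx]
  exact le_of_eq (Real.enorm_eq_ofReal_abs v).symm

theorem stmt12 (A B : Set ℝ) (hA : MeasurableSet A) (hB : MeasurableSet B)
    (hA1 : A ⊆ Set.Icc 0 1) (hB1 : B ⊆ Set.Icc 0 1) (hdisj : Disjoint A B)
    (α β : ℝ) (f : ℝ → ℝ)
    (hf : f = fun x => α * Set.indicator A (fun _ => (1:ℝ)) x
        + β * Set.indicator B (fun _ => (1:ℝ)) x)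
    (hmean : ∫ x in Set.Icc (0:ℝ) 1, f x = 0) :
    ∃ g T : ℝ → ℝ, MPTmod0 (Set.Icc 0 1) (Set.Icc 0 1) T ∧
      MemLp g ⊤ (volume.restrict (Set.Icc (0:ℝ) 1)) ∧
      eLpNorm g ⊤ (volume.restrict (Set.Icc (0:ℝ) 1)) ≤
        eLpNorm f ⊤ (volume.restrict (Set.Icc (0:ℝ) 1)) ∧
      (f =ᵐ[volume.restrict (Set.Icc (0:ℝ) 1)] fun x => g (T x) - g x) ∧
      (∀ x ∈ Set.Icc (0:ℝ) 1 \ (A ∪ B), T x = x) := by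
  classical
  have hAfin := vol_ne_top hA1
  have hBfin := vol_ne_top hB1
  set a := (volume A).toReal with ha
  set b := (volume B).toReal with hb
  have ha0 : 0 ≤ a := ENNReal.toReal_nonneg
  have hb0 : 0 ≤ b := ENNReal.toReal_nonneg
  -- value of f on A and on B
  have hfA : ∀ x ∈ A, f x = α := by
    intro x hx
    have hxB : x ∉ B := fun hxB => (hdisj.le_bot ⟨hx, hxB⟩ : x ∈ (⊥ : Set ℝ))
    rw [hf]
    simp [indicator_of_mem hx, indicator_of_notMem hxB]
  have hfB : ∀ x ∈ B, f x = β := by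
    intro x hx
    have hxA : x ∉ A := fun hxA => (hdisj.le_bot ⟨hxA, hx⟩ : x ∈ (⊥ : Set ℝ))
    rw [hf]
    simp [indicator_of_mem hx, indicator_of_notMem hxA]
  have hf0 : ∀ x, x ∉ A → x ∉ B → f x = 0 := by
    intro x hxA hxB
    rw [hf]
    simp [indicator_of_notMem hxA, indicator_of_notMem hxB]
  -- integral computation
  have hind : ∀ (C : Set ℝ), MeasurableSet C → C ⊆ Icc 0 1 →
      ∫ x in Icc (0:ℝ) 1, Set.indicator C (fun _ => (1:ℝ)) x = (volume C).toReal := by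
    intro C hC hC1
    rw [MeasureTheory.integral_indicator hC, Measure.restrict_restrict hC,
      inter_eq_self_of_subset_left hC1]
    simp [Measure.restrict_apply_univ]
    rfl
  have hintg : ∀ (C : Set ℝ), MeasurableSet C → C ⊆ Icc 0 1 →
      Integrable (Set.indicator C (fun _ => (1:ℝ))) (volume.restrict (Icc 0 1)) := by
    intro C hC hC1
    rw [integrable_indicator_iff hC]
    refine integrableOn_const (ne_of_lt ?_)
    rw [Measure.restrict_apply' measurableSet_Icc]
    exact lt_of_le_of_lt (measure_mono inter_subset_left)
      (lt_of_le_of_ne le_top (vol_ne_top hC1))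
  have hInt : α * a + β * b = 0 := by
    rw [hf] at hmean
    rw [integral_add ((hintg A hA hA1).const_mul α) ((hintg B hB hB1).const_mul β),
      integral_const_mul, integral_const_mul, hind A hA hA1, hind B hB hB1] at hmean
    exact hmean
  by_cases hdeg : volume A = 0 ∨ α = 0
  · -- degenerate case : f = 0 a.e.
    have hdegB : volume B = 0 ∨ β = 0 := by
      have hAz : α * a = 0 := by
        rcases hdeg with h | h
        · simp [ha, h]
        · simp [h]
      have hBz : β * b = 0 := by linarith
      rcases mul_eq_zero.1 hBz with h | h
      · exact Or.inr h
      · left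
        rcases (ENNReal.toReal_eq_zero_iff _).1 h with h' | h'
        · exact h'
        · exact absurd h' hBfin
    have hkey : ∀ x, f x ≠ 0 → (α ≠ 0 ∧ x ∈ A) ∨ (β ≠ 0 ∧ x ∈ B) := by
      intro x hx
      by_cases hxA : x ∈ A
      · rw [hfA x hxA] at hx
        exact Or.inl ⟨hx, hxA⟩
      by_cases hxB : x ∈ B
      · rw [hfB x hxB] at hx
        exact Or.inr ⟨hx, hxB⟩
      · exact absurd (hf0 x hxA hxB) hx
    have hnull : volume {x | f x ≠ 0} = 0 := by
      have hsub2 : {x | f x ≠ 0} ⊆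
          {x | α ≠ 0 ∧ x ∈ A} ∪ {x | β ≠ 0 ∧ x ∈ B} := fun x hx => hkey x hx
      refine measure_mono_null hsub2 (le_antisymm ?_ (zero_le))
      calc volume ({x | α ≠ 0 ∧ x ∈ A} ∪ {x | β ≠ 0 ∧ x ∈ B})
          ≤ volume {x | α ≠ 0 ∧ x ∈ A} + volume {x | β ≠ 0 ∧ x ∈ B} := measure_union_le _ _
        _ ≤ 0 := by
            have h1 : volume {x | α ≠ 0 ∧ x ∈ A} = 0 := by
              rcases eq_or_ne α 0 with h | h
              · have : {x | α ≠ 0 ∧ x ∈ A} = ∅ := by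
                  ext x; simp [h]
                simp [this]
              · have hA0 : volume A = 0 := hdeg.resolve_right h
                exact measure_mono_null (fun x hx => hx.2) hA0
            have h2 : volume {x | β ≠ 0 ∧ x ∈ B} = 0 := by
              rcases eq_or_ne β 0 with h | h
              · have : {x | β ≠ 0 ∧ x ∈ B} = ∅ := by
                  ext x; simp [h]
                simp [this]
              · have hB0 : volume B = 0 := hdegB.resolve_right h
                exact measure_mono_null (fun x hx => hx.2) hB0
            rw [h1, h2, add_zero]
    refine ⟨0, fun x => x, mpt_id, ?_, ?_, ?_, fun x _ => rfl⟩
    · exact MemLp.zero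
    · simp [eLpNorm_zero]
    · have : ∀ᵐ x ∂(volume.restrict (Icc (0:ℝ) 1)), f x = 0 := by
        rw [ae_iff, Measure.restrict_apply' measurableSet_Icc]
        exact measure_mono_null (fun x hx => hx.1) hnull
      filter_upwards [this] with x hx
      simp [hx]
  · push_neg at hdeg
    obtain ⟨hA0, hα⟩ := hdeg
    have hapos : 0 < a := ENNReal.toReal_pos hA0 hAfin
    have hβb : β * b = -(α * a) := by linarith
    have hαa0 : α * a ≠ 0 := mul_ne_zero hα (ne_of_gt hapos)
    have hβb0 : β * b ≠ 0 := by rw [hβb]; simpa using hαa0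
    obtain ⟨hβ, hbne⟩ := mul_ne_zero_iff.1 hβb0
    have hbpos : 0 < b := lt_of_le_of_ne hb0 (Ne.symm hbne)
    have hB0 : volume B ≠ 0 := by
      intro h
      rw [hb, h] at hbpos
      simp at hbpos
    obtain ⟨NA1, MA1, mNA1, mMA1, sNA1, sMA1, nNA1, nMA1, bijA1, fwdA1, pushA1⟩ :=
      cdf_exists A hA hA1 b
    obtain ⟨NB1, MB1, mNB1, mMB1, sNB1, sMB1, nNB1, nMB1, bijB1, fwdB1, pushB1⟩ :=
      cdf_exists B hB hB1 0
    obtain ⟨NA2, MA2, mNA2, mMA2, sNA2, sMA2, nNA2, nMA2, bijA2, fwdA2, pushA2⟩ :=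
      cdf_exists A hA hA1 0
    obtain ⟨NB2, MB2, mNB2, mMB2, sNB2, sMB2, nNB2, nMB2, bijB2, fwdB2, pushB2⟩ :=
      cdf_exists B hB hB1 a
    set φA1 := cphi A b with hφA1
    set φB1 := cphi B 0 with hφB1
    set φA2 := cphi A 0 with hφA2
    set φB2 := cphi B a with hφB2
    set invA := Function.invFunOn φA1 (A \ NA1) with hinvA
    set invB := Function.invFunOn φB1 (B \ NB1) with hinvB
    set Φ := fun x => if x ∈ A then φA2 x else if x ∈ B then φB2 x else x with hΦdef
    set Ψ := fun y => if y < b then invB y else invA y with hΨdef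
    set T := fun x => if x ∈ A ∪ B then Ψ (Φ x) else x with hTdef
    set gl := fun y => (β / a) * (y - (a + b) / 2) with hgl
    set g := fun x => if x ∈ A then gl (φA1 x) else if x ∈ B then gl (φB1 x) else 0 with hgdef
    have mφA1 : Measurable φA1 := by rw [hφA1]; exact cphi_meas hA1
    have mφB1 : Measurable φB1 := by rw [hφB1]; exact cphi_meas hB1
    have mφA2 : Measurable φA2 := by rw [hφA2]; exact cphi_meas hA1
    have mφB2 : Measurable φB2 := by rw [hφB2]; exact cphi_meas hB1
    have hΦmeas : Measurable Φ := by
      rw [hΦdef]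
      exact Measurable.ite hA mφA2 (Measurable.ite hB mφB2 measurable_id)
    have hglcont : Continuous gl := by
      rw [hgl]; fun_prop
    have hgmeas : Measurable g := by
      rw [hgdef]
      exact Measurable.ite hA (hglcont.measurable.comp mφA1)
        (Measurable.ite hB (hglcont.measurable.comp mφB1) measurable_const)
    set Mt := ((MA1 ∪ MB1) ∪ MA2) ∪ MB2 with hMt
    have mMt : MeasurableSet Mt := ((mMA1.union mMB1).union mMA2).union mMB2
    have nMt : volume Mt = 0 := by
      rw [hMt]
      refine measure_union_null (measure_union_null (measure_union_null nMA1 nMB1) nMA2) nMB2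
    set N := (NA2 ∪ NB2) ∪ ((A ∩ φA2 ⁻¹' Mt) ∪ (B ∩ φB2 ⁻¹' Mt)) with hN
    have mN : MeasurableSet N :=
      (mNA2.union mNB2).union
        ((hA.inter (cphi_meas hA1 mMt)).union (hB.inter (cphi_meas hB1 mMt)))
    have nN : volume N = 0 := by
      have h1 : volume (A ∩ φA2 ⁻¹' Mt) = 0 := by
        rw [pushA2 Mt mMt]; exact measure_mono_null inter_subset_right nMt
      have h2 : volume (B ∩ φB2 ⁻¹' Mt) = 0 := by
        rw [pushB2 Mt mMt]; exact measure_mono_null inter_subset_right nMt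
      rw [hN]
      exact measure_union_null (measure_union_null nNA2 nNB2) (measure_union_null h1 h2)
    have sN : N ⊆ A ∪ B := by
      rw [hN]
      refine union_subset (union_subset ?_ ?_) (union_subset ?_ ?_)
      · exact sNA2.trans subset_union_left
      · exact sNB2.trans subset_union_right
      · exact inter_subset_left.trans subset_union_left
      · exact inter_subset_left.trans subset_union_right
    set Gd := (A ∪ B) \ N with hGd
    have mGd : MeasurableSet Gd := (hA.union hB).diff mN
    have hxBnA : ∀ x, x ∈ B → x ∉ A := by
      intro x hxB hxA
      exact absurd (hdisj.le_bot ⟨hxA, hxB⟩) (by simp)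
    have hΦA : ∀ x, x ∈ A → Φ x = φA2 x := by
      intro x hxA; simp only [hΦdef, if_pos hxA]
    have hΦB : ∀ x, x ∈ B → Φ x = φB2 x := by
      intro x hxB; simp only [hΦdef, if_neg (hxBnA x hxB), if_pos hxB]
    -- the key pointwise description of T on the good set
    have hT : ∀ x ∈ Gd,
        ((T x ∈ A \ NA1 ∧ φA1 (T x) = Φ x) ∨ (T x ∈ B \ NB1 ∧ φB1 (T x) = Φ x))
        ∧ Φ x ∉ Mt ∧ (x ∈ A → Φ x ∈ Ico 0 (0 + a)) ∧ (x ∈ B → Φ x ∈ Ico a (a + b)) := by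
      intro x hx
      have hxN := hx.2
      have hΦM : Φ x ∉ Mt := by
        intro hmem
        rcases hx.1 with hxA | hxB
        · refine hxN (Or.inr (Or.inl ⟨hxA, ?_⟩))
          simp only [mem_preimage]
          rwa [← hΦA x hxA]
        · refine hxN (Or.inr (Or.inr ⟨hxB, ?_⟩))
          simp only [mem_preimage]
          rwa [← hΦB x hxB]
      have hmemA : x ∈ A → Φ x ∈ Ico 0 (0 + a) := by
        intro hxA
        have hx2 : x ∈ A \ NA2 := ⟨hxA, fun h => hxN (Or.inl (Or.inl h))⟩
        have := bijA2.mapsTo hx2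
        rw [hΦA x hxA]
        exact this.1
      have hmemB : x ∈ B → Φ x ∈ Ico a (a + b) := by
        intro hxB
        have hx2 : x ∈ B \ NB2 := ⟨hxB, fun h => hxN (Or.inl (Or.inr h))⟩
        have := bijB2.mapsTo hx2
        rw [hΦB x hxB]
        exact this.1
      have hΦrange : 0 ≤ Φ x ∧ Φ x < a + b := by
        rcases hx.1 with hxA | hxB
        · have h := hmemA hxA
          rw [mem_Ico] at h
          exact ⟨h.1, by linarith [h.2]⟩
        · have h := hmemB hxB
          rw [mem_Ico] at h
          exact ⟨by linarith [h.1], h.2⟩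
      refine ⟨?_, hΦM, hmemA, hmemB⟩
      by_cases hzb : Φ x < b
      · have hz : Φ x ∈ Ico 0 (0 + b) \ MB1 := by
          refine ⟨⟨hΦrange.1, by linarith⟩, fun h => hΦM (Or.inl (Or.inl (Or.inr h)))⟩
        obtain ⟨w, hw, hwz⟩ := bijB1.surjOn hz
        have h1 : invB (Φ x) ∈ B \ NB1 := Function.invFunOn_mem ⟨w, hw, hwz⟩
        have h2 : φB1 (invB (Φ x)) = Φ x := Function.invFunOn_eq ⟨w, hw, hwz⟩
        have hTx : T x = invB (Φ x) := by
          simp only [hTdef, if_pos hx.1, hΨdef, if_pos hzb]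
        refine Or.inr ⟨?_, ?_⟩
        · rw [hTx]; exact h1
        · rw [hTx]; exact h2
      · have hz : Φ x ∈ Ico b (b + a) \ MA1 := by
          refine ⟨⟨not_lt.1 hzb, by linarith [hΦrange.2]⟩,
            fun h => hΦM (Or.inl (Or.inl (Or.inl h)))⟩
        obtain ⟨w, hw, hwz⟩ := bijA1.surjOn hz
        have h1 : invA (Φ x) ∈ A \ NA1 := Function.invFunOn_mem ⟨w, hw, hwz⟩
        have h2 : φA1 (invA (Φ x)) = Φ x := Function.invFunOn_eq ⟨w, hw, hwz⟩
        have hTx : T x = invA (Φ x) := by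
          simp only [hTdef, if_pos hx.1, hΨdef, if_neg hzb]
        refine Or.inl ⟨?_, ?_⟩
        · rw [hTx]; exact h1
        · rw [hTx]; exact h2
    -- injectivity of Φ on the good set
    have hΦinj : ∀ x ∈ Gd, ∀ y ∈ Gd, Φ x = Φ y → x = y := by
      intro x hx y hy heq
      rcases hx.1 with hxA | hxB <;> rcases hy.1 with hyA | hyB
      · refine bijA2.injOn ⟨hxA, fun h => hx.2 (Or.inl (Or.inl h))⟩
          ⟨hyA, fun h => hy.2 (Or.inl (Or.inl h))⟩ ?_
        rwa [← hΦA x hxA, ← hΦA y hyA]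
      · exfalso
        have h1 := (hT x hx).2.2.1 hxA
        have h2 := (hT y hy).2.2.2 hyB
        rw [mem_Ico] at h1 h2
        rw [heq] at h1
        linarith [h1.2, h2.1]
      · exfalso
        have h1 := (hT x hx).2.2.2 hxB
        have h2 := (hT y hy).2.2.1 hyA
        rw [mem_Ico] at h1 h2
        rw [heq] at h1
        linarith [h1.1, h2.2]
      · refine bijB2.injOn ⟨hxB, fun h => hx.2 (Or.inl (Or.inr h))⟩
          ⟨hyB, fun h => hy.2 (Or.inl (Or.inr h))⟩ ?_
        rwa [← hΦB x hxB, ← hΦB y hyB]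
    -- image of Φ
    have himgΦ : ∀ S, S ⊆ Gd → Φ '' S = φA2 '' (S ∩ A) ∪ φB2 '' (S ∩ B) := by
      intro S hS
      ext y
      constructor
      · rintro ⟨x, hxS, rfl⟩
        rcases (hS hxS).1 with hxA | hxB
        · exact Or.inl ⟨x, ⟨hxS, hxA⟩, (hΦA x hxA).symm⟩
        · exact Or.inr ⟨x, ⟨hxS, hxB⟩, (hΦB x hxB).symm⟩
      · rintro (⟨x, ⟨hxS, hxA⟩, rfl⟩ | ⟨x, ⟨hxS, hxB⟩, rfl⟩)
        · exact ⟨x, hxS, hΦA x hxA⟩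
        · exact ⟨x, hxS, hΦB x hxB⟩
    -- image ranges
    have hrngA2 : ∀ S, S ⊆ A \ NA2 → φA2 '' S ⊆ Ico 0 (0 + a) \ MA2 :=
      fun S hS => (bijA2.mapsTo.mono hS (subset_refl _)).image_subset
    have hrngB2 : ∀ S, S ⊆ B \ NB2 → φB2 '' S ⊆ Ico a (a + b) \ MB2 :=
      fun S hS => (bijB2.mapsTo.mono hS (subset_refl _)).image_subset
    have hrngA1 : ∀ S, S ⊆ A \ NA1 → φA1 '' S ⊆ Ico b (b + a) \ MA1 :=
      fun S hS => (bijA1.mapsTo.mono hS (subset_refl _)).image_subset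
    have hrngB1 : ∀ S, S ⊆ B \ NB1 → φB1 '' S ⊆ Ico 0 (0 + b) \ MB1 :=
      fun S hS => (bijB1.mapsTo.mono hS (subset_refl _)).image_subset
    have hSGA : ∀ S, S ⊆ Gd → S ∩ A ⊆ A \ NA2 :=
      fun S hS x hx => ⟨hx.2, fun h => (hS hx.1).2 (Or.inl (Or.inl h))⟩
    have hSGB : ∀ S, S ⊆ Gd → S ∩ B ⊆ B \ NB2 :=
      fun S hS x hx => ⟨hx.2, fun h => (hS hx.1).2 (Or.inl (Or.inr h))⟩
    -- forward measure property of Φ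
    have hΦfwd : ∀ S, S ⊆ Gd → MeasurableSet S →
        MeasurableSet (Φ '' S) ∧ volume (Φ '' S) = volume S := by
      intro S hS mS
      obtain ⟨m1, v1⟩ := fwdA2 (S ∩ A) (hSGA S hS) (mS.inter hA)
      obtain ⟨m2, v2⟩ := fwdB2 (S ∩ B) (hSGB S hS) (mS.inter hB)
      rw [himgΦ S hS]
      have hdisj2 : Disjoint (φA2 '' (S ∩ A)) (φB2 '' (S ∩ B)) := by
        rw [disjoint_left]
        intro y hy1 hy2
        have r1 := (hrngA2 _ (hSGA S hS) hy1).1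
        have r2 := (hrngB2 _ (hSGB S hS) hy2).1
        rw [mem_Ico] at r1 r2
        linarith [r1.2, r2.1]
      refine ⟨m1.union m2, ?_⟩
      rw [measure_union hdisj2 m2, v1, v2,
        ← measure_union (hdisj.mono inter_subset_right inter_subset_right : Disjoint (S ∩ A) (S ∩ B)) (mS.inter hB)]
      congr 1
      rw [← inter_union_distrib_left]
      exact inter_eq_self_of_subset_left (hS.trans diff_subset)
    -- image description of T
    have himgT : ∀ S, S ⊆ Gd →
        T '' S = ((A \ NA1) ∩ φA1 ⁻¹' (Φ '' S)) ∪ ((B \ NB1) ∩ φB1 ⁻¹' (Φ '' S)) := by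
      intro S hS
      ext y
      constructor
      · rintro ⟨x, hxS, rfl⟩
        rcases (hT x (hS hxS)).1 with ⟨h1, h2⟩ | ⟨h1, h2⟩
        · refine Or.inl ⟨h1, ?_⟩
          simp only [mem_preimage]
          rw [h2]
          exact mem_image_of_mem _ hxS
        · refine Or.inr ⟨h1, ?_⟩
          simp only [mem_preimage]
          rw [h2]
          exact mem_image_of_mem _ hxS
      · rintro (⟨hyA, hyP⟩ | ⟨hyB, hyP⟩)
        · simp only [mem_preimage] at hyP
          obtain ⟨x, hxS, hq⟩ := hyP
          rcases (hT x (hS hxS)).1 with ⟨h1, h2⟩ | ⟨h1, h2⟩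
          · exact ⟨x, hxS, bijA1.injOn h1 hyA (by rw [h2, hq])⟩
          · exfalso
            have hr1 := (bijB1.mapsTo h1).1
            have hr2 := (bijA1.mapsTo hyA).1
            rw [mem_Ico] at hr1 hr2
            rw [h2, hq] at hr1
            linarith [hr1.2, hr2.1]
        · simp only [mem_preimage] at hyP
          obtain ⟨x, hxS, hq⟩ := hyP
          rcases (hT x (hS hxS)).1 with ⟨h1, h2⟩ | ⟨h1, h2⟩
          · exfalso
            have hr1 := (bijA1.mapsTo h1).1
            have hr2 := (bijB1.mapsTo hyB).1
            rw [mem_Ico] at hr1 hr2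
            rw [h2, hq] at hr1
            linarith [hr1.1, hr2.2]
          · exact ⟨x, hxS, bijB1.injOn h1 hyB (by rw [h2, hq])⟩
    -- forward measure property of T
    have hTfwd : ∀ S, S ⊆ Gd → MeasurableSet S →
        MeasurableSet (T '' S) ∧ volume (T '' S) = volume S := by
      intro S hS mS
      obtain ⟨mW, vW⟩ := hΦfwd S hS mS
      have hWsub : Φ '' S ⊆ Ico 0 (a + b) := by
        rintro y ⟨x, hxS, rfl⟩
        obtain ⟨-, -, h3, h4⟩ := hT x (hS hxS)
        rcases (hS hxS).1 with hxA | hxB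
        · have h := h3 hxA
          rw [mem_Ico] at h ⊢
          exact ⟨h.1, by linarith [h.2]⟩
        · have h := h4 hxB
          rw [mem_Ico] at h ⊢
          exact ⟨by linarith [h.1], h.2⟩
      rw [himgT S hS]
      have e1 : (A \ NA1) ∩ φA1 ⁻¹' (Φ '' S) = (A ∩ φA1 ⁻¹' (Φ '' S)) \ NA1 := by
        ext z
        simp only [mem_inter_iff, mem_diff]
        tauto
      have e2 : (B \ NB1) ∩ φB1 ⁻¹' (Φ '' S) = (B ∩ φB1 ⁻¹' (Φ '' S)) \ NB1 := by
        ext z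
        simp only [mem_inter_iff, mem_diff]
        tauto
      have mm1 : MeasurableSet ((A \ NA1) ∩ φA1 ⁻¹' (Φ '' S)) :=
        (hA.diff mNA1).inter (mφA1 mW)
      have mm2 : MeasurableSet ((B \ NB1) ∩ φB1 ⁻¹' (Φ '' S)) :=
        (hB.diff mNB1).inter (mφB1 mW)
      refine ⟨mm1.union mm2, ?_⟩
      have hd12 : Disjoint ((A \ NA1) ∩ φA1 ⁻¹' (Φ '' S)) ((B \ NB1) ∩ φB1 ⁻¹' (Φ '' S)) :=
        (hdisj.mono diff_subset diff_subset).mono inter_subset_left inter_subset_left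
      rw [measure_union hd12 mm2, e1, e2, measure_diff_null nNA1, measure_diff_null nNB1,
        pushA1 (Φ '' S) mW, pushB1 (Φ '' S) mW]
      -- volume (Icc b (b+a) ∩ W) + volume (Icc 0 (0+b) ∩ W) = volume S
      have hic1 : Icc b (b + a) ∩ (Φ '' S) = Ico b (b + a) ∩ (Φ '' S) := by
        ext y
        simp only [mem_inter_iff, mem_Icc, mem_Ico]
        constructor
        · rintro ⟨⟨hy1, hy2⟩, hyW⟩
          have := hWsub hyW
          rw [mem_Ico] at this
          exact ⟨⟨hy1, by linarith [this.2]⟩, hyW⟩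
        · rintro ⟨⟨hy1, hy2⟩, hyW⟩
          exact ⟨⟨hy1, le_of_lt hy2⟩, hyW⟩
      have hic2 : volume (Icc 0 (0 + b) ∩ (Φ '' S)) = volume (Ico 0 (0 + b) ∩ (Φ '' S)) := by
        refine le_antisymm ?_ (measure_mono (inter_subset_inter_left _ Ico_subset_Icc_self))
        have hss : Icc 0 (0 + b) ∩ (Φ '' S) ⊆ (Ico 0 (0 + b) ∩ (Φ '' S)) ∪ {0 + b} := by
          rintro y ⟨⟨hy1, hy2⟩, hyW⟩
          rcases lt_or_eq_of_le hy2 with h | h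
          · exact Or.inl ⟨⟨hy1, h⟩, hyW⟩
          · exact Or.inr (by simp [h])
        calc volume (Icc 0 (0 + b) ∩ (Φ '' S))
            ≤ volume ((Ico 0 (0 + b) ∩ (Φ '' S)) ∪ {0 + b}) := measure_mono hss
          _ ≤ volume (Ico 0 (0 + b) ∩ (Φ '' S)) + volume ({0 + b} : Set ℝ) := measure_union_le _ _
          _ = volume (Ico 0 (0 + b) ∩ (Φ '' S)) := by rw [Real.volume_singleton, add_zero]
      rw [hic1, hic2]
      have hdic : Disjoint (Ico b (b + a) ∩ (Φ '' S)) (Ico 0 (0 + b) ∩ (Φ '' S)) := by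
        rw [disjoint_left]
        rintro y ⟨hy1, -⟩ ⟨hy2, -⟩
        rw [mem_Ico] at hy1 hy2
        linarith [hy1.1, hy2.2]
      rw [← measure_union hdic (measurableSet_Ico.inter mW)]
      have huni : Ico b (b + a) ∩ (Φ '' S) ∪ Ico 0 (0 + b) ∩ (Φ '' S) = Φ '' S := by
        rw [← union_inter_distrib_right]
        refine inter_eq_self_of_subset_right ?_
        intro y hy
        have := hWsub hy
        rw [mem_Ico] at this
        by_cases hyb : y < b
        · exact Or.inr (by rw [mem_Ico]; exact ⟨this.1, by linarith⟩)
        · exact Or.inl (by rw [mem_Ico]; exact ⟨not_lt.1 hyb, by linarith [this.2]⟩)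
      rw [huni, vW]
    -- preimage description of T
    have hpreT : ∀ S : Set ℝ, MeasurableSet S →
        Gd ∩ T ⁻¹' S =
          Gd ∩ Φ ⁻¹' (φA1 '' (S ∩ (A \ NA1)) ∪ φB1 '' (S ∩ (B \ NB1))) := by
      intro S mS
      ext x
      simp only [mem_inter_iff, mem_preimage]
      constructor
      · rintro ⟨hx, hTS⟩
        refine ⟨hx, ?_⟩
        rcases (hT x hx).1 with ⟨h1, h2⟩ | ⟨h1, h2⟩
        · exact Or.inl ⟨T x, ⟨hTS, h1⟩, h2⟩
        · exact Or.inr ⟨T x, ⟨hTS, h1⟩, h2⟩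
      · rintro ⟨hx, hmem2⟩
        refine ⟨hx, ?_⟩
        rcases (hT x hx).1 with ⟨h1, h2⟩ | ⟨h1, h2⟩ <;>
          rcases hmem2 with ⟨w, ⟨hwS, hw⟩, hweq⟩ | ⟨w, ⟨hwS, hw⟩, hweq⟩
        · have : T x = w := bijA1.injOn h1 hw (by rw [h2, ← hweq])
          rw [this]; exact hwS
        · exfalso
          have hr1 := (bijA1.mapsTo h1).1
          have hr2 := (bijB1.mapsTo hw).1
          rw [mem_Ico] at hr1 hr2
          rw [h2] at hr1
          rw [hweq] at hr2
          linarith [hr1.1, hr2.2]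
        · exfalso
          have hr1 := (bijB1.mapsTo h1).1
          have hr2 := (bijA1.mapsTo hw).1
          rw [mem_Ico] at hr1 hr2
          rw [h2] at hr1
          rw [hweq] at hr2
          linarith [hr1.2, hr2.1]
        · have : T x = w := bijB1.injOn h1 hw (by rw [h2, ← hweq])
          rw [this]; exact hwS
    -- global setup
    have volAB : volume (A ∪ B) = volume A + volume B := measure_union hdisj hB
    have hABfin : volume (A ∪ B) ≠ ⊤ := by
      rw [volAB]
      exact ENNReal.add_ne_top.2 ⟨hAfin, hBfin⟩
    have vGd : volume Gd = volume (A ∪ B) := measure_diff_null nN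
    obtain ⟨mTG, vTG⟩ := hTfwd Gd subset_rfl mGd
    have hTGsub : T '' Gd ⊆ A ∪ B := by
      rw [himgT Gd subset_rfl]
      rintro y (⟨h, -⟩ | ⟨h, -⟩)
      · exact Or.inl h.1
      · exact Or.inr h.1
    set N' := (A ∪ B) \ (T '' Gd) with hN'
    have nN' : volume N' = 0 := by
      rw [hN', measure_diff hTGsub mTG.nullMeasurableSet (by rw [vTG, vGd]; exact hABfin),
        vTG, vGd, tsub_self]
    have hABIcc : A ∪ B ⊆ Icc 0 1 := union_subset hA1 hB1
    have hTid : ∀ x, x ∉ A ∪ B → T x = x := by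
      intro x hx
      simp only [hTdef, if_neg hx]
    have hdc : Icc (0:ℝ) 1 \ N = Gd ∪ (Icc 0 1 \ (A ∪ B)) := by
      ext x
      constructor
      · rintro ⟨hxI, hxN⟩
        by_cases hx : x ∈ A ∪ B
        · exact Or.inl ⟨hx, hxN⟩
        · exact Or.inr ⟨hxI, hx⟩
      · rintro (⟨hx1, hx2⟩ | ⟨hx1, hx2⟩)
        · exact ⟨hABIcc hx1, hx2⟩
        · exact ⟨hx1, fun h => hx2 (sN h)⟩
    have hdc' : Icc (0:ℝ) 1 \ N' = (T '' Gd) ∪ (Icc 0 1 \ (A ∪ B)) := by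
      ext x
      constructor
      · rintro ⟨hxI, hxN⟩
        by_cases hx : x ∈ A ∪ B
        · by_cases hx2 : x ∈ T '' Gd
          · exact Or.inl hx2
          · exact absurd ⟨hx, hx2⟩ hxN
        · exact Or.inr ⟨hxI, hx⟩
      · rintro (h | ⟨hx1, hx2⟩)
        · exact ⟨hABIcc (hTGsub h), fun hc => hc.2 h⟩
        · exact ⟨hx1, fun hc => hx2 hc.1⟩
    have hbijT : BijOn T (Icc 0 1 \ N) (Icc 0 1 \ N') := by
      rw [hdc, hdc']
      refine ⟨?_, ?_, ?_⟩
      · rintro x (hx | hx)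
        · exact Or.inl (mem_image_of_mem T hx)
        · rw [hTid x hx.2]
          exact Or.inr hx
      · rintro x hx y hy heq
        rcases hx with hx | hx <;> rcases hy with hy | hy
        · have h1 := hT x hx
          have h2 := hT y hy
          have hΦe : Φ x = Φ y := by
            rcases h1.1 with ⟨a1, e1⟩ | ⟨a1, e1⟩ <;> rcases h2.1 with ⟨a2, e2⟩ | ⟨a2, e2⟩
            · rw [← e1, ← e2, heq]
            · exfalso
              rw [heq] at a1
              exact hxBnA _ a2.1 a1.1
            · exfalso
              rw [heq] at a1
              exact hxBnA _ a1.1 a2.1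
            · rw [← e1, ← e2, heq]
          exact hΦinj x hx y hy hΦe
        · exfalso
          refine hy.2 ?_
          rw [← hTid y hy.2, ← heq]
          exact hTGsub (mem_image_of_mem T hx)
        · exfalso
          refine hx.2 ?_
          rw [← hTid x hx.2, heq]
          exact hTGsub (mem_image_of_mem T hy)
        · rwa [hTid x hx.2, hTid y hy.2] at heq
      · rintro y (hy | hy)
        · obtain ⟨x, hx, rfl⟩ := hy
          exact ⟨x, Or.inl hx, rfl⟩
        · exact ⟨y, Or.inr hy, hTid y hy.2⟩
    have hfwdT : ∀ S : Set ℝ, S ⊆ Icc 0 1 \ N → MeasurableSet S →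
        MeasurableSet (T '' S) ∧ volume (T '' S) = volume S := by
      intro S hS mS
      have hsplit : S = (S ∩ Gd) ∪ (S \ (A ∪ B)) := by
        ext x
        constructor
        · intro hx
          by_cases h2 : x ∈ A ∪ B
          · exact Or.inl ⟨hx, h2, (hS hx).2⟩
          · exact Or.inr ⟨hx, h2⟩
        · rintro (h | h)
          · exact h.1
          · exact h.1
      have hidpart : T '' (S \ (A ∪ B)) = S \ (A ∪ B) := by
        rw [image_congr (fun x hx => hTid x hx.2)]
        exact image_id _
      have hTS : T '' S = T '' (S ∩ Gd) ∪ (S \ (A ∪ B)) := by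
        conv_lhs => rw [hsplit]
        rw [image_union, hidpart]
      obtain ⟨m1, v1⟩ := hTfwd (S ∩ Gd) inter_subset_right (mS.inter mGd)
      have hTsub2 : T '' (S ∩ Gd) ⊆ A ∪ B := fun y hy =>
        hTGsub (image_mono inter_subset_right hy)
      have hd2 : Disjoint (T '' (S ∩ Gd)) (S \ (A ∪ B)) := by
        rw [disjoint_left]
        intro y hy1 hy2
        exact hy2.2 (hTsub2 hy1)
      constructor
      · rw [hTS]
        exact m1.union (mS.diff (hA.union hB))
      · rw [hTS, measure_union hd2 (mS.diff (hA.union hB)), v1]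
        have hSG : S ∩ Gd = S ∩ (A ∪ B) := by
          ext x
          constructor
          · rintro ⟨h1, h2⟩
            exact ⟨h1, h2.1⟩
          · rintro ⟨h1, h2⟩
            exact ⟨h1, h2, (hS h1).2⟩
        rw [hSG, ← measure_inter_add_diff S (hA.union hB)]
    have hbwdT : ∀ S : Set ℝ, S ⊆ Icc 0 1 \ N' → MeasurableSet S →
        MeasurableSet ((Icc 0 1 \ N) ∩ T ⁻¹' S) := by
      intro S hS mS
      have hsplit2 : (Icc (0:ℝ) 1 \ N) ∩ T ⁻¹' S =
          (Gd ∩ T ⁻¹' S) ∪ ((Icc 0 1 \ (A ∪ B)) ∩ S) := by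
        rw [hdc]
        ext x
        constructor
        · rintro ⟨hx | hx, hTS⟩
          · exact Or.inl ⟨hx, hTS⟩
          · refine Or.inr ⟨hx, ?_⟩
            rw [mem_preimage, hTid x hx.2] at hTS
            exact hTS
        · rintro (⟨hx, hTS⟩ | ⟨hx, hxS⟩)
          · exact ⟨Or.inl hx, hTS⟩
          · refine ⟨Or.inr hx, ?_⟩
            rw [mem_preimage, hTid x hx.2]
            exact hxS
      rw [hsplit2, hpreT S mS]
      obtain ⟨mw1, -⟩ := fwdA1 (S ∩ (A \ NA1)) inter_subset_right (mS.inter (hA.diff mNA1))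
      obtain ⟨mw2, -⟩ := fwdB1 (S ∩ (B \ NB1)) inter_subset_right (mS.inter (hB.diff mNB1))
      exact (mGd.inter (hΦmeas (mw1.union mw2))).union
        ((measurableSet_Icc.diff (hA.union hB)).inter mS)
    -- norm bounds
    have habsb : |β| * b = |α| * a := by
      have h1 : |β * b| = |α * a| := by rw [hβb, abs_neg]
      rwa [abs_mul, abs_mul, abs_of_nonneg hb0, abs_of_nonneg ha0] at h1
    have hane : a ≠ 0 := ne_of_gt hapos
    have hgl_bound : ∀ y, 0 ≤ y → y ≤ a + b → |gl y| ≤ (|α| + |β|) / 2 := by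
      intro y h1 h2
      simp only [hgl]
      rw [abs_mul, abs_div]
      have h3 : |y - (a + b) / 2| ≤ (a + b) / 2 := by
        rw [abs_le]
        constructor <;> linarith
      have h4 : |a| = a := abs_of_pos hapos
      calc |β| / |a| * |y - (a + b) / 2| ≤ |β| / a * ((a + b) / 2) := by
            rw [h4]
            exact mul_le_mul_of_nonneg_left h3 (div_nonneg (abs_nonneg _) ha0)
        _ = (|β| * a + |β| * b) / (2 * a) := by field_simp
        _ = (|β| * a + |α| * a) / (2 * a) := by rw [habsb]
        _ = (|α| + |β|) / 2 := by field_simp; ring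
    have hgbd : ∀ x, ‖g x‖ ≤ (|α| + |β|) / 2 := by
      intro x
      rw [Real.norm_eq_abs]
      by_cases hxA : x ∈ A
      · simp only [hgdef, if_pos hxA]
        have h := cphi_mem (A := A) (c := b) hA1 x
        rw [mem_Icc] at h
        exact hgl_bound _ (by rw [hφA1]; linarith [h.1]) (by rw [hφA1]; linarith [h.2])
      by_cases hxB : x ∈ B
      · simp only [hgdef, if_neg hxA, if_pos hxB]
        have h := cphi_mem (A := B) (c := 0) hB1 x
        rw [mem_Icc] at h
        exact hgl_bound _ (by rw [hφB1]; linarith [h.1]) (by rw [hφB1]; linarith [h.2])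
      · simp only [hgdef, if_neg hxA, if_neg hxB, abs_zero]
        positivity
    have hKle : (|α| + |β|) / 2 ≤ max |α| |β| := by
      rcases le_total |α| |β| with h | h
      · rw [max_eq_right h]; linarith
      · rw [max_eq_left h]; linarith
    have hfnorm : ENNReal.ofReal (max |α| |β|) ≤
        eLpNorm f ⊤ (volume.restrict (Icc (0:ℝ) 1)) := by
      rw [eLpNorm_exponent_top]
      have hμA : (volume.restrict (Icc (0:ℝ) 1)) A ≠ 0 := by
        rw [Measure.restrict_apply' measurableSet_Icc, inter_eq_self_of_subset_left hA1]
        exact hA0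
      have hμB : (volume.restrict (Icc (0:ℝ) 1)) B ≠ 0 := by
        rw [Measure.restrict_apply' measurableSet_Icc, inter_eq_self_of_subset_left hB1]
        exact hB0
      rcases le_total |α| |β| with h | h
      · rw [max_eq_right h]
        exact essSup_lower hμB hfB
      · rw [max_eq_left h]
        exact essSup_lower hμA hfA
    have hmemg : MemLp g ⊤ (volume.restrict (Icc (0:ℝ) 1)) := by
      refine ⟨hgmeas.aestronglyMeasurable, ?_⟩
      rw [eLpNorm_exponent_top]
      exact lt_of_le_of_lt (eLpNormEssSup_le_of_ae_bound (ae_of_all _ hgbd))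
        ENNReal.ofReal_lt_top
    have hnorm : eLpNorm g ⊤ (volume.restrict (Icc (0:ℝ) 1)) ≤
        eLpNorm f ⊤ (volume.restrict (Icc (0:ℝ) 1)) := by
      refine le_trans ?_ hfnorm
      rw [eLpNorm_exponent_top]
      exact le_trans (eLpNormEssSup_le_of_ae_bound (ae_of_all _ hgbd))
        (ENNReal.ofReal_le_ofReal hKle)
    -- a.e. identity
    have hae : f =ᵐ[volume.restrict (Icc (0:ℝ) 1)] fun x => g (T x) - g x := by
      have hsubN : {x | ¬ f x = g (T x) - g x} ∩ Icc 0 1 ⊆ N := by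
        rintro x ⟨hbad, hxI⟩
        by_contra hxN
        apply hbad
        by_cases hxAB : x ∈ A ∪ B
        · have hxG : x ∈ Gd := ⟨hxAB, hxN⟩
          have hgT : g (T x) = gl (Φ x) := by
            rcases (hT x hxG).1 with ⟨h1, h2⟩ | ⟨h1, h2⟩
            · simp only [hgdef, if_pos h1.1]
              rw [h2]
            · simp only [hgdef, if_neg (hxBnA _ h1.1), if_pos h1.1]
              rw [h2]
          rcases hxAB with hxA | hxB
          · rw [hfA x hxA, hgT, hΦA x hxA]
            simp only [hgdef, if_pos hxA]
            have hφ2 : φA2 x = φA1 x - b := by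
              rw [hφA2, hφA1]
              simp [cphi]
            rw [hφ2]
            simp only [hgl]
            field_simp
            linarith [hβb]
          · have hxA : x ∉ A := hxBnA x hxB
            rw [hfB x hxB, hgT, hΦB x hxB]
            simp only [hgdef, if_neg hxA, if_pos hxB]
            have hφ2 : φB2 x = φB1 x + a := by
              rw [hφB2, hφB1]
              simp [cphi]
              ring
            rw [hφ2]
            simp only [hgl]
            field_simp
            ring
        · rw [hf0 x (fun h => hxAB (Or.inl h)) (fun h => hxAB (Or.inr h)), hTid x hxAB]
          ring
      rw [Filter.EventuallyEq, ae_iff, Measure.restrict_apply' measurableSet_Icc]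
      exact measure_mono_null hsubN nN
    exact ⟨g, T, ⟨N, N', sN.trans hABIcc, diff_subset.trans hABIcc, nN, nN', hbijT, hfwdT, hbwdT⟩,
      hmemg, hnorm, hae, fun x hx => hTid x hx.2⟩
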